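/- Every regular 2-form admits a canonical form: if F is a 2-form on ℝ⁴ whose invariants tr(F̂∘F̂) and tr(F̂∘(*F)̂) do not both vanish, then there exist real numbers φ, ψ and a unitary 2-form U (i.e. tr(Û∘Û) = 2 and tr(Û∘(*U)̂) = 0) such that F = e^φ·(cos ψ · U + sin ψ · (*U)). -/

import Mathlib

set_option maxHeartbeats 4000000
set_option maxRecDepth 8000


open Matrix Real

/-- Spacetime `ℝ⁴` with the standard basis. -/
abbrev V4 : Type := Fin 4 → ℝ

/-- `4×4` real matrices: components of bilinear forms / endomorphisms of `ℝ⁴`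
in the standard basis `(e₀,e₁,e₂,e₃)`. -/
abbrev Mat4 : Type := Matrix (Fin 4) (Fin 4) ℝ

/-- The Minkowski metric `diag(-1,1,1,1)` (it equals its own inverse). -/
noncomputable def ηm : Mat4 := Matrix.diagonal ![-1, 1, 1, 1]

/-- The Minkowski bilinear form `η(x,y) = -x₀y₀ + x₁y₁ + x₂y₂ + x₃y₃`. -/
noncomputable def ηb (x y : V4) : ℝ := x ⬝ᵥ ηm *ᵥ y

/-- A vector `x` is timelike if `η(x,x) < 0`. -/
noncomputable def Timelike (x : V4) : Prop := ηb x x < 0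

/-- Evaluation of the bilinear form with component matrix `B`:
`B(x,y) = Σ xᵅ B_{αβ} yᵝ`. -/
noncomputable def bil (B : Mat4) (x y : V4) : ℝ := x ⬝ᵥ B *ᵥ y

/-- A 2-form is a skew-symmetric bilinear form. -/
noncomputable def IsTwoForm (B : Mat4) : Prop := Bᵀ = -B

/-- The endomorphism `B̂` associated with the bilinear form `B`, i.e. the unique
endomorphism with `η(B̂x, y) = B(x,y)` for all `x, y`.  (Indeed
`ηb (hat B *ᵥ x) y = bil B x y`.) -/
noncomputable def hat (B : Mat4) : Mat4 := ηm * Bᵀ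

/-- The totally antisymmetric Levi-Civita symbol on four indices, `ε₀₁₂₃ = 1`. -/
noncomputable def lc (a b c d : Fin 4) : ℝ :=
  (((b : ℕ) : ℝ) - ((a : ℕ) : ℝ)) * (((c : ℕ) : ℝ) - ((a : ℕ) : ℝ)) *
    (((d : ℕ) : ℝ) - ((a : ℕ) : ℝ)) * (((c : ℕ) : ℝ) - ((b : ℕ) : ℝ)) *
    (((d : ℕ) : ℝ) - ((b : ℕ) : ℝ)) * (((d : ℕ) : ℝ) - ((c : ℕ) : ℝ)) / 12

/-- The Hodge dual of a 2-form:
`(*F)(e_α,e_β) = (1/2) Σ ε_{αβγδ} η^{γμ} η^{δν} F(e_μ,e_ν)`. -/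
noncomputable def hodge (F : Mat4) : Mat4 :=
  Matrix.of fun α β => (1/2) * ∑ γ, ∑ δ, ∑ μ, ∑ ν, lc α β γ δ * ηm γ μ * ηm δ ν * F μ ν

/-- A unitary 2-form: `tr(Û∘Û) = 2` and `tr(Û∘(*U)̂) = 0`. -/
noncomputable def IsUnitary (U : Mat4) : Prop :=
  IsTwoForm U ∧ (hat U * hat U).trace = 2 ∧ (hat U * hat (hodge U)).trace = 0

/-- An endomorphism `L` is η-self-adjoint if `η(Lx,y) = η(x,Ly)` for all `x, y`. -/
noncomputable def SelfAdj (L : Mat4) : Prop := ∀ x y : V4, ηb (L *ᵥ x) y = ηb x (L *ᵥ y)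
lemma ηm_eq : ηm = !![-1,0,0,0; 0,1,0,0; 0,0,1,0; 0,0,0,1] := by
  ext i j; fin_cases i <;> fin_cases j <;> simp [ηm, Matrix.diagonal] <;> rfl

lemma hodge_eq (F : Mat4) : hodge F =
    !![0, (F 2 3 - F 3 2)/2, (F 3 1 - F 1 3)/2, (F 1 2 - F 2 1)/2;
       (F 3 2 - F 2 3)/2, 0, (F 3 0 - F 0 3)/2, (F 0 2 - F 2 0)/2;
       (F 1 3 - F 3 1)/2, (F 0 3 - F 3 0)/2, 0, (F 1 0 - F 0 1)/2;
       (F 2 1 - F 1 2)/2, (F 2 0 - F 0 2)/2, (F 0 1 - F 1 0)/2, 0] := by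
  ext α β
  fin_cases α <;> fin_cases β <;>
  · simp only [hodge, Matrix.of_apply, Fin.sum_univ_four, ηm_eq]
    norm_num [lc, Matrix.vecHead, Matrix.vecTail, Matrix.cons_val_two, Matrix.cons_val_three,
      show ((0:Fin 4):ℕ)=0 from rfl, show ((1:Fin 4):ℕ)=1 from rfl,
      show ((2:Fin 4):ℕ)=2 from rfl, show ((3:Fin 4):ℕ)=3 from rfl]
    try ring

lemma trace_hat (F G : Mat4) : (hat F * hat G).trace =
    F 0 0 * G 0 0 - F 1 0 * G 0 1 - F 2 0 * G 0 2 - F 3 0 * G 0 3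
    - F 0 1 * G 1 0 + F 1 1 * G 1 1 + F 2 1 * G 1 2 + F 3 1 * G 1 3
    - F 0 2 * G 2 0 + F 1 2 * G 2 1 + F 2 2 * G 2 2 + F 3 2 * G 2 3
    - F 0 3 * G 3 0 + F 1 3 * G 3 1 + F 2 3 * G 3 2 + F 3 3 * G 3 3 := by
  simp only [Matrix.trace, Matrix.diag_apply, Fin.sum_univ_four, Matrix.mul_apply,
    hat, Matrix.transpose_apply, ηm_eq]
  simp [Matrix.vecHead, Matrix.vecTail]
  ring

lemma hodge_skew (F : Mat4) : (hodge F)ᵀ = -(hodge F) := by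
  rw [hodge_eq]
  ext i j
  fin_cases i <;> fin_cases j <;> simp <;> ring

lemma hodge_comb (F G : Mat4) (c d : ℝ) :
    hodge (c • F + d • G) = c • hodge F + d • hodge G := by
  rw [hodge_eq, hodge_eq F, hodge_eq G]
  ext i j
  fin_cases i <;> fin_cases j <;> simp <;> ring

lemma hodge_hodge (F : Mat4) (h : ∀ i j, F j i = -F i j) : hodge (hodge F) = -F := by
  rw [hodge_eq (hodge F), hodge_eq F]
  ext i j
  fin_cases i <;> fin_cases j <;>
    simp <;>
    linarith [h 0 0, h 0 1, h 0 2, h 0 3, h 1 1, h 1 2, h 1 3, h 2 2, h 2 3, h 3 3]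


lemma key1 (F S : Mat4) (h : ∀ i j, F j i = -F i j) (hs : ∀ i j, S j i = -S i j)
    (e1 : S 0 1 = F 2 3) (e2 : S 0 2 = -F 1 3) (e3 : S 0 3 = F 1 2)
    (e4 : S 1 2 = -F 0 3) (e5 : S 1 3 = F 0 2) (e6 : S 2 3 = -F 0 1) (c d : ℝ) :
    (hat (c • F + d • S) * hat (c • F + d • S)).trace
      = (c^2 - d^2) * (hat F * hat F).trace + 2*c*d * (hat F * hat S).trace := by
  rw [trace_hat, trace_hat, trace_hat]
  simp only [Matrix.add_apply, Matrix.smul_apply, smul_eq_mul]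
  have f0 : F 0 0 = 0 := by linarith [h 0 0]
  have f1 : F 1 1 = 0 := by linarith [h 1 1]
  have f2 : F 2 2 = 0 := by linarith [h 2 2]
  have f3 : F 3 3 = 0 := by linarith [h 3 3]
  have s0 : S 0 0 = 0 := by linarith [hs 0 0]
  have s1 : S 1 1 = 0 := by linarith [hs 1 1]
  have s2 : S 2 2 = 0 := by linarith [hs 2 2]
  have s3 : S 3 3 = 0 := by linarith [hs 3 3]
  simp only [h 0 1, h 0 2, h 0 3, h 1 2, h 1 3, h 2 3,
    hs 0 1, hs 0 2, hs 0 3, hs 1 2, hs 1 3, hs 2 3,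
    f0, f1, f2, f3, s0, s1, s2, s3, e1, e2, e3, e4, e5, e6]
  ring

lemma key2 (F S : Mat4) (h : ∀ i j, F j i = -F i j) (hs : ∀ i j, S j i = -S i j)
    (e1 : S 0 1 = F 2 3) (e2 : S 0 2 = -F 1 3) (e3 : S 0 3 = F 1 2)
    (e4 : S 1 2 = -F 0 3) (e5 : S 1 3 = F 0 2) (e6 : S 2 3 = -F 0 1) (c d : ℝ) :
    (hat (c • F + d • S) * hat (c • S + (-d) • F)).trace
      = (c^2 - d^2) * (hat F * hat S).trace - 2*c*d * (hat F * hat F).trace := by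
  rw [trace_hat, trace_hat, trace_hat]
  simp only [Matrix.add_apply, Matrix.smul_apply, smul_eq_mul]
  have f0 : F 0 0 = 0 := by linarith [h 0 0]
  have f1 : F 1 1 = 0 := by linarith [h 1 1]
  have f2 : F 2 2 = 0 := by linarith [h 2 2]
  have f3 : F 3 3 = 0 := by linarith [h 3 3]
  have s0 : S 0 0 = 0 := by linarith [hs 0 0]
  have s1 : S 1 1 = 0 := by linarith [hs 1 1]
  have s2 : S 2 2 = 0 := by linarith [hs 2 2]
  have s3 : S 3 3 = 0 := by linarith [hs 3 3]
  simp only [h 0 1, h 0 2, h 0 3, h 1 2, h 1 3, h 2 3,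
    hs 0 1, hs 0 2, hs 0 3, hs 1 2, hs 1 3, hs 2 3,
    f0, f1, f2, f3, s0, s1, s2, s3, e1, e2, e3, e4, e5, e6]
  ring

/-- Canonical form of a regular 2-form: `F = e^φ(cos ψ · U + sin ψ · *U)`
for some unitary 2-form `U` and real numbers `φ, ψ`. -/
theorem stmt4 (F : Mat4) (hF : IsTwoForm F)
    (hreg : ¬((hat F * hat F).trace = 0 ∧ (hat F * hat (hodge F)).trace = 0)) :
    ∃ (φ ψ : ℝ) (U : Mat4), IsUnitary U ∧
      F = Real.exp φ • (Real.cos ψ • U + Real.sin ψ • hodge U) := by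
  have hF' : Fᵀ = -F := hF
  have h : ∀ i j, F j i = -F i j := fun i j => by
    have := congrFun (congrFun hF' i) j; simpa using this
  have hs : ∀ i j, hodge F j i = -hodge F i j := fun i j => by
    have := congrFun (congrFun (hodge_skew F) i) j; simpa using this
  have e1 : hodge F 0 1 = F 2 3 := by rw [hodge_eq]; simp; linarith [h 2 3]
  have e2 : hodge F 0 2 = -F 1 3 := by rw [hodge_eq]; simp; linarith [h 1 3]
  have e3 : hodge F 0 3 = F 1 2 := by rw [hodge_eq]; simp; linarith [h 1 2]
  have e4 : hodge F 1 2 = -F 0 3 := by rw [hodge_eq]; simp; linarith [h 0 3]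
  have e5 : hodge F 1 3 = F 0 2 := by rw [hodge_eq]; simp; linarith [h 0 2]
  have e6 : hodge F 2 3 = -F 0 1 := by rw [hodge_eq]; simp; linarith [h 0 1]
  set a := (hat F * hat F).trace with hadef
  set b := (hat F * hat (hodge F)).trace with hbdef
  have hab : a ≠ 0 ∨ b ≠ 0 := by by_contra hc; push_neg at hc; exact hreg ⟨hc.1, hc.2⟩
  have hr2 : 0 < a^2 + b^2 := by rcases hab with h'|h' <;> positivity
  set r := Real.sqrt (a^2 + b^2) with hrdef
  have hr : 0 < r := Real.sqrt_pos.mpr hr2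
  have hrsq : r^2 = a^2 + b^2 := Real.sq_sqrt hr2.le
  set z : ℂ := ⟨a, b⟩ with hzdef
  have hz : z ≠ 0 := by
    intro h0
    rw [Complex.ext_iff] at h0
    exact hreg ⟨by simpa using h0.1, by simpa using h0.2⟩
  have habs : ‖z‖ = r := by
    rw [Complex.norm_def, hrdef]
    congr 1
    simp [Complex.normSq_mk, hzdef]; ring
  have hca : Real.cos z.arg = a / r := by
    rw [Complex.cos_arg hz, habs]
  have hsa : Real.sin z.arg = b / r := by
    rw [Complex.sin_arg, habs]
  set ψ : ℝ := -z.arg / 2 with hψdef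
  have hψ2 : (2:ℝ) * ψ = -z.arg := by rw [hψdef]; ring
  have hc2 : Real.cos ψ^2 - Real.sin ψ^2 = a/r := by
    have h1 := Real.sin_sq_add_cos_sq ψ
    have h2 := Real.cos_two_mul ψ
    rw [hψ2, Real.cos_neg, hca] at h2
    linarith
  have hs2 : 2 * Real.sin ψ * Real.cos ψ = -(b/r) := by
    have h2 := Real.sin_two_mul ψ
    rw [hψ2, Real.sin_neg, hsa] at h2
    linarith
  set E : ℝ := Real.sqrt (r/2) with hEdef
  have hEpos : 0 < E := Real.sqrt_pos.mpr (by positivity)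
  have hE2 : E^2 = r/2 := Real.sq_sqrt (by positivity)
  have hEi : E⁻¹^2 = 2/r := by
    rw [inv_pow, hE2, inv_div]
  set c : ℝ := E⁻¹ * Real.cos ψ with hcdef
  set d : ℝ := -(E⁻¹ * Real.sin ψ) with hddef
  set U : Mat4 := c • F + d • hodge F with hUdef
  have hU2 : hodge U = c • hodge F + (-d) • F := by
    rw [hUdef, hodge_comb F (hodge F) c d, hodge_hodge F h]
    ext i j
    simp [Matrix.add_apply, Matrix.smul_apply, Matrix.neg_apply]
    try ring
  refine ⟨Real.log E, ψ, U, ⟨?_, ?_, ?_⟩, ?_⟩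
  · -- IsTwoForm U
    show Uᵀ = -U
    rw [hUdef, Matrix.transpose_add, Matrix.transpose_smul, Matrix.transpose_smul,
      hF', hodge_skew]
    ext i j
    simp [Matrix.add_apply, Matrix.smul_apply, Matrix.neg_apply]
    ring
  · -- trace (hat U * hat U) = 2
    rw [hUdef, key1 F (hodge F) h hs e1 e2 e3 e4 e5 e6 c d]
    calc (c^2 - d^2) * a + 2*c*d * b
        = E⁻¹^2 * ((Real.cos ψ^2 - Real.sin ψ^2) * a - (2*Real.sin ψ*Real.cos ψ) * b) := by
          rw [hcdef, hddef]; ring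
      _ = (2/r) * ((a/r)*a - (-(b/r))*b) := by rw [hEi, hc2, hs2]
      _ = 2*(a^2+b^2)/r^2 := by ring
      _ = 2 := by rw [← hrsq]; field_simp
  · -- trace (hat U * hat (hodge U)) = 0
    rw [hU2, hUdef, key2 F (hodge F) h hs e1 e2 e3 e4 e5 e6 c d]
    calc (c^2 - d^2) * b - 2*c*d * a
        = E⁻¹^2 * ((Real.cos ψ^2 - Real.sin ψ^2) * b + (2*Real.sin ψ*Real.cos ψ) * a) := by
          rw [hcdef, hddef]; ring
      _ = (2/r) * ((a/r)*b + (-(b/r))*a) := by rw [hEi, hc2, hs2]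
      _ = 0 := by ring
  · -- F = exp (log E) • (...)
    rw [Real.exp_log hEpos, hU2, hUdef]
    ext i j
    simp only [Matrix.add_apply, Matrix.smul_apply, smul_eq_mul]
    rw [hcdef, hddef]
    have hpy := Real.sin_sq_add_cos_sq ψ
    field_simp
    linear_combination (-(F i j)) * hpy
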